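/- In the Zeckendorf game played from n copies of F_1, for every n > 2 the second player has a winning strategy (where the player who makes the final move, reaching the Zeckendorf decomposition, wins). -/

import Mathlib

/-- Fibonacci numbers indexed `F_1 = 1, F_2 = 2, F_{i+1} = F_i + F_{i-1}`. -/
def ZFib (i : ℕ) : ℕ := Nat.fib (i + 1)

/-- Legal moves of the Zeckendorf game, on multisets of Fibonacci indices. -/
inductive ZMove : Multiset ℕ → Multiset ℕ → Prop
  | combine (s : Multiset ℕ) (i : ℕ) (h : 2 ≤ i) :
      ZMove ((i - 1) ::ₘ i ::ₘ s) ((i + 1) ::ₘ s)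
  | addOnes (s : Multiset ℕ) :
      ZMove (1 ::ₘ 1 ::ₘ s) (2 ::ₘ s)
  | splitTwos (s : Multiset ℕ) :
      ZMove (2 ::ₘ 2 ::ₘ s) (1 ::ₘ 3 ::ₘ s)
  | split (s : Multiset ℕ) (i : ℕ) (h : 3 ≤ i) :
      ZMove (i ::ₘ i ::ₘ s) ((i - 2) ::ₘ (i + 1) ::ₘ s)

mutual
  /-- The player to move from this state can force a win (i.e., can force
  that they make the final move). -/
  inductive MoverWins : Multiset ℕ → Prop
    | step (s t : Multiset ℕ) : ZMove s t → MoverLoses t → MoverWins s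

  /-- Every move by the player to move leads to a state winning for the
  opponent; in particular a terminal state is losing for the player to move
  (the previous player made the last move and wins). -/
  inductive MoverLoses : Multiset ℕ → Prop
    | step (s : Multiset ℕ) : (∀ t, ZMove s t → MoverWins t) → MoverLoses s
end

/-- Every move strictly decreases the measure `(card, sum, count 2)`
lexicographically. -/
lemma zmove_dec {s t : Multiset ℕ} (h : ZMove s t) :
    t.card < s.card ∨ (t.card = s.card ∧ (t.sum < s.sum ∨
      (t.sum = s.sum ∧ t.count 2 < s.count 2))) := by
  cases h with
  | combine s i hi => left; simp
  | addOnes s => left; simp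
  | splitTwos s =>
      right
      refine ⟨by simp, Or.inr ⟨by simp [Multiset.sum_cons]; omega, ?_⟩⟩
      simp [Multiset.count_cons]
  | split s i h3 =>
      right
      refine ⟨by simp, Or.inl ?_⟩
      simp [Multiset.sum_cons]
      omega

/-- Consistency and determinacy of the game, proved together by strong
induction along the lexicographic measure `(card, sum, count 2)`. -/
lemma zgame_aux : ∀ (a b c : ℕ) (s : Multiset ℕ), s.card = a → s.sum = b → s.count 2 = c →
    (MoverWins s → MoverLoses s → False) ∧ (MoverWins s ∨ MoverLoses s) := by
  intro a
  induction a using Nat.strong_induction_on with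
  | _ a iha =>
  intro b
  induction b using Nat.strong_induction_on with
  | _ b ihb =>
  intro c
  induction c using Nat.strong_induction_on with
  | _ c ihc =>
  intro s hca hsb hc2
  subst hca hsb hc2
  have IH : ∀ t, ZMove s t →
      (MoverWins t → MoverLoses t → False) ∧ (MoverWins t ∨ MoverLoses t) := by
    intro t mt
    rcases zmove_dec mt with h | ⟨h1, h2 | ⟨h2, h3⟩⟩
    · exact iha _ h _ _ _ rfl rfl rfl
    · exact ihb _ h2 _ _ h1 rfl rfl
    · exact ihc _ h3 _ h1 h2 rfl
  constructor
  · intro hw hl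
    cases hw with
    | step _ t mt hlt =>
      cases hl with
      | step _ f => exact (IH t mt).1 (f t mt) hlt
  · by_cases hx : ∃ t, ZMove s t ∧ MoverLoses t
    · obtain ⟨t, mt, hlt⟩ := hx
      exact Or.inl (MoverWins.step s t mt hlt)
    · right
      exact MoverLoses.step s (fun t mt =>
        ((IH t mt).2).resolve_right (fun hlt => hx ⟨t, mt, hlt⟩))

/-- A position cannot be both winning and losing for the mover. -/
lemma not_both {s : Multiset ℕ} (hw : MoverWins s) (hl : MoverLoses s) : False :=
  (zgame_aux _ _ _ s rfl rfl rfl).1 hw hl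

/-- The game is determined. -/
lemma determinacy (s : Multiset ℕ) : MoverWins s ∨ MoverLoses s :=
  (zgame_aux _ _ _ s rfl rfl rfl).2

/-- Classification of all moves from `ZMove`. -/
lemma zmove_cases {u t : Multiset ℕ} (h : ZMove u t) :
    (∃ s i, 2 ≤ i ∧ u = (i - 1) ::ₘ i ::ₘ s ∧ t = (i + 1) ::ₘ s) ∨
    (∃ s, u = 1 ::ₘ 1 ::ₘ s ∧ t = 2 ::ₘ s) ∨
    (∃ s, u = 2 ::ₘ 2 ::ₘ s ∧ t = 1 ::ₘ 3 ::ₘ s) ∨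
    (∃ s i, 3 ≤ i ∧ u = i ::ₘ i ::ₘ s ∧ t = (i - 2) ::ₘ (i + 1) ::ₘ s) := by
  cases h with
  | combine s i hi => exact Or.inl ⟨s, i, hi, rfl, rfl⟩
  | addOnes s => exact Or.inr (Or.inl ⟨s, rfl, rfl⟩)
  | splitTwos s => exact Or.inr (Or.inr (Or.inl ⟨s, rfl, rfl⟩))
  | split s i hi => exact Or.inr (Or.inr (Or.inr ⟨s, i, hi, rfl, rfl⟩))

/-- The only move from `a ::ₘ 1^m` (for `a ≥ 3`) is to combine two ones. -/
lemma inv_single {a m : ℕ} {t : Multiset ℕ} (ha : 3 ≤ a)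
    (h : ZMove (a ::ₘ Multiset.replicate m 1) t) :
    2 ≤ m ∧ t = 2 ::ₘ a ::ₘ Multiset.replicate (m - 2) 1 := by
  rcases zmove_cases h with ⟨s, i, hi, hu, ht⟩ | ⟨s, hu, ht⟩ | ⟨s, hu, ht⟩ | ⟨s, i, hi, hu, ht⟩
  · exfalso
    have h1 : i ∈ a ::ₘ Multiset.replicate m 1 := by rw [hu]; simp
    have h2 : (i - 1) ∈ a ::ₘ Multiset.replicate m 1 := by rw [hu]; simp
    simp [Multiset.mem_cons, Multiset.mem_replicate] at h1 h2
    omega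
  · have hm : m = s.count 1 + 2 := by
      have hc := congrArg (Multiset.count 1) hu
      simp [Multiset.count_cons, Multiset.count_replicate,
        (show ¬((1:ℕ) = a) by omega)] at hc
      omega
    refine ⟨by omega, ?_⟩
    obtain ⟨k, rfl⟩ : ∃ k, m = k + 2 := ⟨m - 2, by omega⟩
    have key : a ::ₘ Multiset.replicate (k + 2) 1
        = 1 ::ₘ 1 ::ₘ (a ::ₘ Multiset.replicate (k + 2 - 2) 1) := by
      rw [show k + 2 - 2 = k by omega, show k + 2 = k + 1 + 1 by omega,
        Multiset.replicate_succ, Multiset.replicate_succ]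
      rw [Multiset.cons_swap a 1, Multiset.cons_swap a 1]
    rw [key, Multiset.cons_inj_right, Multiset.cons_inj_right] at hu
    rw [ht, ← hu]
  · exfalso
    have h1 : (2:ℕ) ∈ a ::ₘ Multiset.replicate m 1 := by rw [hu]; simp
    simp [Multiset.mem_cons, Multiset.mem_replicate] at h1
    omega
  · exfalso
    have h1 : i ∈ a ::ₘ Multiset.replicate m 1 := by rw [hu]; simp
    simp [Multiset.mem_cons, Multiset.mem_replicate] at h1
    have hia : i = a := by omega
    subst hia
    have hc := congrArg (Multiset.count i) hu
    simp [Multiset.count_cons, Multiset.count_replicate,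
      (show ¬((i:ℕ) = 1) by omega), (show ¬((1:ℕ) = i) by omega)] at hc

/-- The only move from `1^n` is to combine two ones. -/
lemma inv_ones {n : ℕ} {t : Multiset ℕ} (h : ZMove (Multiset.replicate n 1) t) :
    2 ≤ n ∧ t = 2 ::ₘ Multiset.replicate (n - 2) 1 := by
  rcases zmove_cases h with ⟨s, i, hi, hu, ht⟩ | ⟨s, hu, ht⟩ | ⟨s, hu, ht⟩ | ⟨s, i, hi, hu, ht⟩
  · exfalso
    have h1 : i ∈ Multiset.replicate n 1 := by rw [hu]; simp
    simp [Multiset.mem_replicate] at h1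
    omega
  · have hm : n = s.count 1 + 2 := by
      have hc := congrArg (Multiset.count 1) hu
      simp [Multiset.count_cons, Multiset.count_replicate] at hc
      omega
    refine ⟨by omega, ?_⟩
    obtain ⟨k, rfl⟩ : ∃ k, n = k + 2 := ⟨n - 2, by omega⟩
    have key : Multiset.replicate (k + 2) 1
        = 1 ::ₘ 1 ::ₘ Multiset.replicate (k + 2 - 2) 1 := by
      rw [show k + 2 - 2 = k by omega, show k + 2 = k + 1 + 1 by omega,
        Multiset.replicate_succ, Multiset.replicate_succ]
    rw [key, Multiset.cons_inj_right, Multiset.cons_inj_right] at hu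
    rw [ht, ← hu]
  · exfalso
    have h1 : (2:ℕ) ∈ Multiset.replicate n 1 := by rw [hu]; simp
    simp [Multiset.mem_replicate] at h1
  · exfalso
    have h1 : i ∈ Multiset.replicate n 1 := by rw [hu]; simp
    simp [Multiset.mem_replicate] at h1
    omega

/-- The moves from `3 ::ₘ 3 ::ₘ 1^m`: split the threes, or combine two ones. -/
lemma inv_E {m : ℕ} {t : Multiset ℕ}
    (h : ZMove (3 ::ₘ 3 ::ₘ Multiset.replicate m 1) t) :
    t = 1 ::ₘ 4 ::ₘ Multiset.replicate m 1 ∨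
      (2 ≤ m ∧ t = 2 ::ₘ 3 ::ₘ 3 ::ₘ Multiset.replicate (m - 2) 1) := by
  rcases zmove_cases h with ⟨s, i, hi, hu, ht⟩ | ⟨s, hu, ht⟩ | ⟨s, hu, ht⟩ | ⟨s, i, hi, hu, ht⟩
  · exfalso
    have h1 : i ∈ 3 ::ₘ 3 ::ₘ Multiset.replicate m 1 := by rw [hu]; simp
    have h2 : (i - 1) ∈ 3 ::ₘ 3 ::ₘ Multiset.replicate m 1 := by rw [hu]; simp
    simp [Multiset.mem_cons, Multiset.mem_replicate] at h1 h2
    omega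
  · right
    have hm : m = s.count 1 + 2 := by
      have hc := congrArg (Multiset.count 1) hu
      simp [Multiset.count_cons, Multiset.count_replicate] at hc
      omega
    refine ⟨by omega, ?_⟩
    obtain ⟨k, rfl⟩ : ∃ k, m = k + 2 := ⟨m - 2, by omega⟩
    have key : (3:ℕ) ::ₘ 3 ::ₘ Multiset.replicate (k + 2) 1
        = 1 ::ₘ 1 ::ₘ (3 ::ₘ 3 ::ₘ Multiset.replicate (k + 2 - 2) 1) := by
      rw [show k + 2 - 2 = k by omega, show k + 2 = k + 1 + 1 by omega,
        Multiset.replicate_succ, Multiset.replicate_succ]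
      rw [Multiset.cons_swap (3:ℕ) 1, Multiset.cons_swap (3:ℕ) 1,
        Multiset.cons_swap (3:ℕ) 1, Multiset.cons_swap (3:ℕ) 1]
    rw [key, Multiset.cons_inj_right, Multiset.cons_inj_right] at hu
    rw [ht, ← hu]
  · exfalso
    have h1 : (2:ℕ) ∈ 3 ::ₘ 3 ::ₘ Multiset.replicate m 1 := by rw [hu]; simp
    simp [Multiset.mem_cons, Multiset.mem_replicate] at h1
  · left
    have h1 : i ∈ 3 ::ₘ 3 ::ₘ Multiset.replicate m 1 := by rw [hu]; simp
    simp [Multiset.mem_cons, Multiset.mem_replicate] at h1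
    have hia : i = 3 := by omega
    subst hia
    rw [Multiset.cons_inj_right, Multiset.cons_inj_right] at hu
    rw [ht, ← hu]

/-- For every `n > 2`, Player 2 has a winning strategy in the Zeckendorf game:
the player to move (Player 1) loses from the initial state of `n` copies of `F_1`. -/
theorem player_two_wins (n : ℕ) (hn : 2 < n) :
    MoverLoses (Multiset.replicate n 1) := by
  refine MoverLoses.step _ (fun t mt => ?_)
  obtain ⟨-, rfl⟩ := inv_ones mt
  -- goal: MoverWins (2 ::ₘ 1^(n-2))
  rcases determinacy (2 ::ₘ Multiset.replicate (n - 2) 1) with hw | hl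
  · exact hw
  exfalso
  cases hl with
  | step _ f =>
  -- Player 2's move to A = 3 ::ₘ 1^(n-3) would be winning for mover (P1)
  have e1 : (2:ℕ) ::ₘ Multiset.replicate (n - 2) 1
      = 1 ::ₘ 2 ::ₘ Multiset.replicate (n - 3) 1 := by
    rw [show n - 2 = (n - 3) + 1 by omega, Multiset.replicate_succ,
      Multiset.cons_swap]
  have hA : MoverWins (3 ::ₘ Multiset.replicate (n - 3) 1) := by
    refine f _ ?_
    rw [e1]
    exact ZMove.combine _ 2 (by norm_num)
  -- its unique continuation is C = 2 ::ₘ 3 ::ₘ 1^(n-5), which is MoverLoses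
  cases hA with
  | step _ t1 m1 hL1 =>
  obtain ⟨h5, rfl⟩ := inv_single (by norm_num) m1
  -- hL1 : MoverLoses (2 ::ₘ 3 ::ₘ 1^(n-3-2))
  cases hL1 with
  | step _ fC =>
  -- from C, the move to D = 4 ::ₘ 1^(n-5) is winning for its mover
  have hD : MoverWins (4 ::ₘ Multiset.replicate (n - 3 - 2) 1) :=
    fC _ (ZMove.combine _ 3 (by norm_num))
  -- D's unique continuation is G = 2 ::ₘ 4 ::ₘ 1^(n-7), which is MoverLoses
  cases hD with
  | step _ t2 m2 hLG =>
  obtain ⟨h7, rfl⟩ := inv_single (by norm_num) m2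
  -- reconstruct MoverWins D for later use
  have hWD : MoverWins (4 ::ₘ Multiset.replicate (n - 3 - 2) 1) :=
    MoverWins.step _ _ m2 hLG
  -- from C, the move to E = 3 ::ₘ 3 ::ₘ 1^(n-6) is winning for its mover
  have e3 : (2:ℕ) ::ₘ 3 ::ₘ Multiset.replicate (n - 3 - 2) 1
      = 1 ::ₘ 2 ::ₘ (3 ::ₘ Multiset.replicate (n - 6) 1) := by
    rw [show n - 3 - 2 = (n - 6) + 1 by omega, Multiset.replicate_succ]
    rw [Multiset.cons_swap (3:ℕ) 1, Multiset.cons_swap (2:ℕ) 1]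
  have hE : MoverWins (3 ::ₘ 3 ::ₘ Multiset.replicate (n - 6) 1) := by
    refine fC _ ?_
    rw [e3]
    exact ZMove.combine _ 2 (by norm_num)
  cases hE with
  | step _ u mu hLu =>
  rcases inv_E mu with rfl | ⟨h8, rfl⟩
  · -- E's move back to D: contradiction with MoverWins D
    have eD : (1:ℕ) ::ₘ 4 ::ₘ Multiset.replicate (n - 6) 1
        = 4 ::ₘ Multiset.replicate (n - 3 - 2) 1 := by
      rw [show n - 3 - 2 = (n - 6) + 1 by omega, Multiset.replicate_succ,
        Multiset.cons_swap]
    rw [eD] at hLu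
    exact not_both hWD hLu
  · -- E's move to J = 2 ::ₘ 3 ::ₘ 3 ::ₘ 1^(n-8); J is MoverLoses,
    -- but J has a move to G, so G is MoverWins: contradiction
    cases hLu with
    | step _ fJ =>
    have eJ : (2:ℕ) ::ₘ 3 ::ₘ 3 ::ₘ Multiset.replicate (n - 6 - 2) 1
        = 3 ::ₘ 3 ::ₘ (2 ::ₘ Multiset.replicate (n - 6 - 2) 1) := by
      rw [Multiset.cons_swap (2:ℕ) 3, Multiset.cons_swap (2:ℕ) 3]
    have hWG : MoverWins (1 ::ₘ 4 ::ₘ 2 ::ₘ Multiset.replicate (n - 6 - 2) 1) := by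
      refine fJ _ ?_
      rw [eJ]
      exact ZMove.split _ 3 (by norm_num)
    have eG : (1:ℕ) ::ₘ 4 ::ₘ 2 ::ₘ Multiset.replicate (n - 6 - 2) 1
        = 2 ::ₘ 4 ::ₘ Multiset.replicate (n - 3 - 2 - 2) 1 := by
      rw [show n - 3 - 2 - 2 = (n - 6 - 2) + 1 by omega, Multiset.replicate_succ]
      rw [Multiset.cons_swap (4:ℕ) 2, Multiset.cons_swap (1:ℕ) 2,
        Multiset.cons_swap (1:ℕ) 4]
    rw [eG] at hWG
    exact not_both hWG hLG
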